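/- Every cycle C_n (n ≥ 3) has a proper 3-colouring such that the colouring fails to be odd at no more than two vertices; i.e., there is a proper colouring with colours {1,2,3} for which at most two vertices v have both neighbours receiving colours making every colour appear an even number of times in N(v). -/

import Mathlib

open scoped Classical
open Finset

/-- The colouring `c` is *odd at* `v`: some colour appears an odd number of
times in the neighbourhood of `v`. -/
def SimpleGraph.IsOddAt {V α : Type} [Fintype V] (G : SimpleGraph V)
    (c : V → α) (v : V) : Prop :=
  ∃ a : α, Odd ((G.neighborFinset v).filter fun w => c w = a).card

/-- `c` is a proper odd vertex-colouring of `G`. -/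
def SimpleGraph.IsProperOdd {V α : Type} [Fintype V] (G : SimpleGraph V)
    (c : V → α) : Prop :=
  (∀ u w : V, G.Adj u w → c u ≠ c w) ∧
  ∀ v : V, 0 < G.degree v → G.IsOddAt c v

/-- `G` has a proper odd colouring with at most 9 colours. -/
def SimpleGraph.HasNice {V : Type} [Fintype V] (G : SimpleGraph V) : Prop :=
  ∃ c : V → Fin 9, G.IsProperOdd c


private def fcol (n k : ℕ) : Fin 3 :=
  if k = n - 1 ∧ n % 3 = 1 then 1 else ⟨k % 3, Nat.mod_lt _ (by norm_num)⟩

private lemma fcol_val (n k : ℕ) :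
    (fcol n k).val = if k = n - 1 ∧ n % 3 = 1 then 1 else k % 3 := by
  unfold fcol; split_ifs <;> rfl

private lemma val_add_one {m : ℕ} (v : Fin (m + 3)) :
    ((v + 1 : Fin (m + 3))).val = if v.val = m + 2 then 0 else v.val + 1 := by
  have hv := v.isLt
  rw [Fin.val_add, Fin.val_one]
  split_ifs with h
  · rw [h]; simp
  · exact Nat.mod_eq_of_lt (by omega)

private lemma val_sub_one {m : ℕ} (v : Fin (m + 3)) :
    ((v - 1 : Fin (m + 3))).val = if v.val = 0 then m + 2 else v.val - 1 := by
  have hv := v.isLt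
  rw [Fin.sub_def, Fin.val_one]
  simp only [Fin.val_mk]
  split_ifs with h
  · rw [h]; simp [Nat.mod_eq_of_lt]
  · have : m + 3 - 1 + v.val = (v.val - 1) + (m+3) := by omega
    rw [this, Nat.add_mod_right, Nat.mod_eq_of_lt (by omega)]

private lemma isOddAt_pair {V α : Type} [Fintype V] [DecidableEq V] (G : SimpleGraph V)
    (c : V → α) (v a b : V) (hab : a ≠ b)
    (hset : G.neighborSet v = {a, b}) :
    G.IsOddAt c v ↔ c a ≠ c b := by
  unfold SimpleGraph.IsOddAt
  have hfin : G.neighborFinset v = {a, b} := by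
    refine (Set.toFinset_congr hset).trans ?_
    simp
  rw [hfin]
  constructor
  · rintro ⟨x, hx⟩ heq
    rw [Finset.filter_insert, Finset.filter_singleton] at hx
    by_cases h1 : c a = x <;> by_cases h2 : c b = x <;>
      simp [h1, h2, Finset.card_insert_of_notMem, hab, Nat.odd_iff] at hx
    · exact h2 (heq ▸ h1)
    · exact h1 (heq ▸ h2)
  · intro hne'
    refine ⟨c a, ?_⟩
    rw [Finset.filter_insert, Finset.filter_singleton, if_pos rfl, if_neg (Ne.symm hne')]
    simp

private lemma isOddAt_iff {m : ℕ} (c : Fin (m+3) → Fin 3) (v : Fin (m+3)) :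
    (SimpleGraph.cycleGraph (m+3)).IsOddAt c v ↔ c (v-1) ≠ c (v+1) := by
  have hv := v.isLt
  have hne : (v - 1 : Fin (m+3)) ≠ v + 1 := by
    intro h
    have h2 := congrArg Fin.val h
    rw [val_sub_one, val_add_one] at h2
    split_ifs at h2 <;> omega
  exact isOddAt_pair _ c v _ _ hne (SimpleGraph.cycleGraph_neighborSet (n := m+1))

private lemma fcol_proper {m : ℕ} (v : Fin (m+3)) :
    fcol (m+3) ((v+1 : Fin (m+3))).val ≠ fcol (m+3) v.val := by
  have hv := v.isLt
  intro h
  have h2 := congrArg Fin.val h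
  rw [fcol_val, fcol_val, val_add_one] at h2
  split_ifs at h2 <;> omega

/-- Every cycle `C_n` (`n ≥ 3`) has a proper 3-colouring that fails to be odd
at no more than two vertices. -/
theorem cycle_proper_three_colouring_almost_odd (n : ℕ) (hn : 3 ≤ n) :
    ∃ c : Fin n → Fin 3,
      (∀ u v : Fin n, (SimpleGraph.cycleGraph n).Adj u v → c u ≠ c v) ∧
      (Finset.univ.filter fun v : Fin n =>
        ¬ (SimpleGraph.cycleGraph n).IsOddAt c v).card ≤ 2 := by
  obtain ⟨m, rfl⟩ : ∃ m, n = m + 3 := ⟨n - 3, by omega⟩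
  refine ⟨fun i => fcol (m+3) i.val, ?_, ?_⟩
  · intro u v hadj
    have h := (SimpleGraph.cycleGraph_adj (n := m+1)).mp hadj
    rcases h with h | h
    · have : u = v + 1 := by rw [sub_eq_iff_eq_add] at h; rw [h]; exact add_comm _ _
      subst this
      exact fcol_proper v
    · have : v = u + 1 := by rw [sub_eq_iff_eq_add] at h; rw [h]; exact add_comm _ _
      subst this
      exact (fcol_proper u).symm
  · set bad : Finset (Fin (m+3)) :=
      if (m+3) % 3 = 1 then {(⟨0, by omega⟩ : Fin (m+3)), ⟨m+1, by omega⟩}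
      else {(⟨0, by omega⟩ : Fin (m+3)), ⟨m+2, by omega⟩} with hbad
    have hsub : (Finset.univ.filter fun v : Fin (m+3) =>
        ¬ (SimpleGraph.cycleGraph (m+3)).IsOddAt (fun i => fcol (m+3) i.val) v) ⊆ bad := by
      intro v hv
      rw [Finset.mem_filter, isOddAt_iff] at hv
      have heq : fcol (m+3) ((v-1 : Fin (m+3))).val = fcol (m+3) ((v+1 : Fin (m+3))).val := by
        by_contra hcon
        exact hv.2 hcon
      have hv3 := v.isLt
      have h2 := congrArg Fin.val heq
      rw [fcol_val, fcol_val, val_sub_one, val_add_one] at h2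
      rw [hbad]
      split_ifs with h3 <;>
        simp only [Finset.mem_insert, Finset.mem_singleton, Fin.ext_iff, Fin.val_mk] <;>
        split_ifs at h2 <;> omega
    calc _ ≤ bad.card := Finset.card_le_card hsub
      _ ≤ 2 := by
        rw [hbad]; split_ifs <;> exact (Finset.card_insert_le _ _).trans (by simp)
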